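/- arXiv:0906.3413 — 2 statements merged into one kernel-verified Lean document; each statement's English description precedes it below -/
import Mathlib

section
/- Let p > 3 be prime, A ≥ 3, B ∈ ℕ, and suppose γ : ℕ → ℤ satisfies γ(p) = 1 + c·p^{k-1} for some integer c and integer weight k with 2 ≤ k < 4. Then for all m ∈ ℕ positive and r ≥ 3: C(mp^r, A, B) - γ(p)·C(mp^{r-1}, A, B) + c·p^{k-1}·C(mp^{r-2}, A, B) ≡ 0 (mod p^{3r+k-4}), where C(n,A,B) = Σ_{j=0}^n binom(n,j)^A binom(2j,j)^B. -/
open Finset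

section ZModUtil
variable {n : ℕ}

lemma zinv_eq_of_mul_eq_one (a b : ZMod n) (h : a * b = 1) : a⁻¹ = b := by
  have ha : IsUnit a := IsUnit.of_mul_eq_one _ h
  calc a⁻¹ = a⁻¹ * (a * b) := by rw [h, mul_one]
    _ = (a⁻¹ * a) * b := by ring
    _ = b := by rw [ZMod.inv_mul_of_unit a ha, one_mul]

lemma zinv_mul (a b : ZMod n) (ha : IsUnit a) (hb : IsUnit b) : (a * b)⁻¹ = a⁻¹ * b⁻¹ := by
  apply zinv_eq_of_mul_eq_one
  calc a * b * (a⁻¹ * b⁻¹) = (a * a⁻¹) * (b * b⁻¹) := by ring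
    _ = 1 := by rw [ZMod.mul_inv_of_unit a ha, ZMod.mul_inv_of_unit b hb, mul_one]

lemma zinv_neg (a : ZMod n) (ha : IsUnit a) : (-a)⁻¹ = -(a⁻¹) := by
  apply zinv_eq_of_mul_eq_one
  have := ZMod.mul_inv_of_unit a ha
  calc (-a) * -(a⁻¹) = a * a⁻¹ := by ring
    _ = 1 := this

lemma zinv_sq (a : ZMod n) (ha : IsUnit a) : (a ^ 2)⁻¹ = (a⁻¹) ^ 2 := by
  apply zinv_eq_of_mul_eq_one
  have := ZMod.mul_inv_of_unit a ha
  calc a ^ 2 * (a⁻¹) ^ 2 = (a * a⁻¹) * (a * a⁻¹) := by ring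
    _ = 1 := by rw [this, mul_one]

lemma zcast_inv {m : ℕ} (h : m ∣ n) (a : ZMod n) (ha : IsUnit a) :
    (ZMod.castHom h (ZMod m)) a⁻¹ = ((ZMod.castHom h (ZMod m)) a)⁻¹ := by
  symm
  apply zinv_eq_of_mul_eq_one
  rw [← map_mul, ZMod.mul_inv_of_unit a ha, map_one]

end ZModUtil

open scoped Classical in
lemma sum_inv_sq_units (n : ℕ) [NeZero n] (h2 : IsUnit (2 : ZMod n)) (h3 : IsUnit (3 : ZMod n)) :
    ∑ x ∈ Finset.univ.filter (fun x : ZMod n => IsUnit x), (x⁻¹) ^ 2 = 0 := by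
  set S := ∑ x ∈ Finset.univ.filter (fun x : ZMod n => IsUnit x), (x⁻¹) ^ 2 with hS
  have h22 : (2:ZMod n) * 2⁻¹ = 1 := ZMod.mul_inv_of_unit 2 h2
  have h2inv : IsUnit ((2:ZMod n)⁻¹) := IsUnit.of_mul_eq_one _ (ZMod.inv_mul_of_unit 2 h2)
  have key : S = (2⁻¹)^2 * S → S = 0 := by
    intro h
    have h4 : (2*2 : ZMod n) * S = S := by
      conv_lhs => rw [h]
      calc (2*2 : ZMod n) * ((2⁻¹)^2 * S) = ((2 * 2⁻¹) * (2 * 2⁻¹)) * S := by ring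
        _ = S := by rw [h22]; ring
    have h3' : (3 : ZMod n) * S = 0 := by
      have : ((2*2 : ZMod n) - 1) * S = 0 := by rw [sub_mul, one_mul, h4]; ring
      have e : ((2*2 : ZMod n) - 1) = 3 := by norm_num
      rwa [e] at this
    calc S = (3⁻¹ * 3) * S := by rw [ZMod.inv_mul_of_unit 3 h3, one_mul]
      _ = 3⁻¹ * (3 * S) := by ring
      _ = 0 := by rw [h3', mul_zero]
  apply key
  have hre : S = ∑ x ∈ Finset.univ.filter (fun x : ZMod n => IsUnit x), ((2 * x)⁻¹) ^ 2 := by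
    rw [hS]
    apply Finset.sum_nbij' (fun x => 2⁻¹ * x) (fun x => 2 * x)
    · intro a ha
      simp only [mem_filter, mem_univ, true_and] at ha ⊢
      exact h2inv.mul ha
    · intro a ha
      simp only [mem_filter, mem_univ, true_and] at ha ⊢
      exact h2.mul ha
    · intro a _
      rw [← mul_assoc, h22, one_mul]
    · intro a _
      rw [← mul_assoc, ZMod.inv_mul_of_unit 2 h2, one_mul]
    · intro a ha
      simp only [mem_filter, mem_univ, true_and] at ha
      rw [← mul_assoc, h22, one_mul]
  conv_lhs => rw [hre]
  rw [Finset.mul_sum]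
  apply Finset.sum_congr rfl
  intro x hx
  simp only [mem_filter, mem_univ, true_and] at hx
  rw [zinv_mul 2 x h2 hx]
  ring

lemma sum_periodic_blocks {R : Type*} [AddCommMonoid R] (g : ℕ → R) (T : ℕ)
    (hper : ∀ i, g (i + T) = g i) (q : ℕ) :
    ∑ i ∈ Finset.range (q * T), g i = q • (∑ i ∈ Finset.range T, g i) := by
  induction q with
  | zero => simp
  | succ q ih =>
    have : (q + 1) * T = q * T + T := by ring
    rw [this, Finset.sum_range_add, ih, succ_nsmul]
    congr 1
    apply Finset.sum_congr rfl
    intro x _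
    have : ∀ k, g (k * T + x) = g x := by
      intro k
      induction k with
      | zero => simp
      | succ k ih2 => rw [show (k+1)*T + x = (k*T + x) + T by ring, hper, ih2]
    exact this q

lemma unit_of_not_dvd (p : ℕ) (hp : p.Prime) (M : ℕ) (i : ℕ) (hi : ¬ p ∣ i) :
    IsUnit ((i : ZMod (p ^ M))) := by
  rw [ZMod.isUnit_iff_coprime]
  apply Nat.Coprime.pow_right
  exact Nat.Coprime.symm ((Nat.Prime.coprime_iff_not_dvd hp).mpr hi)

lemma unit_small (p : ℕ) (hp : p.Prime) (M c : ℕ) (hc : ¬ p ∣ c) :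
    IsUnit ((c : ℕ) : ZMod (p ^ M)) := unit_of_not_dvd p hp M c hc

open scoped Classical in
lemma h2_sum (p : ℕ) (hp : p.Prime) (hp5 : 5 ≤ p) (v : ℕ) (hv : 1 ≤ v) (n : ℕ)
    (hn : p ^ v ∣ n) :
    ∑ i ∈ (Finset.range n).filter (fun i => ¬ p ∣ i), (((i : ZMod (p^v)))⁻¹) ^ 2 = 0 := by
  have hppos : 0 < p := hp.pos
  haveI : NeZero (p ^ v) := ⟨by positivity⟩
  have hpvlt : (1:ℕ) < p ^ v := by
    calc 1 < p := hp.one_lt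
      _ = p ^ 1 := (pow_one p).symm
      _ ≤ p ^ v := Nat.pow_le_pow_right hppos hv
  obtain ⟨q, hq⟩ := hn
  rw [Finset.sum_filter]
  set g : ℕ → ZMod (p^v) := fun i => if ¬ p ∣ i then (((i : ZMod (p^v)))⁻¹) ^ 2 else 0 with hg
  have hpp : p ∣ p ^ v := dvd_pow_self p (by omega)
  have hper : ∀ i, g (i + p ^ v) = g i := by
    intro i
    have hdvd : p ∣ (i + p^v) ↔ p ∣ i := by
      rw [add_comm]
      exact Nat.dvd_add_right hpp
    have hcast : ((i + p^v : ℕ) : ZMod (p^v)) = (i : ZMod (p^v)) := by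
      rw [Nat.cast_add, ZMod.natCast_self, add_zero]
    simp only [hg, hdvd, hcast]
  have hsplit : ∑ i ∈ Finset.range n, g i = q • (∑ i ∈ Finset.range (p^v), g i) := by
    rw [hq, mul_comm]
    exact sum_periodic_blocks g (p^v) hper q
  rw [hsplit]
  have h2 : IsUnit (2 : ZMod (p^v)) := by
    have h := unit_of_not_dvd p hp v 2 (fun h => by have := Nat.le_of_dvd (by norm_num) h; omega)
    rwa [Nat.cast_ofNat] at h
  have h3 : IsUnit (3 : ZMod (p^v)) := by
    have h := unit_of_not_dvd p hp v 3 (fun h => by have := Nat.le_of_dvd (by norm_num) h; omega)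
    rwa [Nat.cast_ofNat] at h
  have hblock : ∑ i ∈ Finset.range (p^v), g i = 0 := by
    rw [hg]
    simp only
    rw [← Finset.sum_filter]
    have hbij : ∑ i ∈ (Finset.range (p^v)).filter (fun i => ¬ p ∣ i), (((i : ZMod (p^v)))⁻¹) ^ 2
        = ∑ x ∈ Finset.univ.filter (fun x : ZMod (p^v) => IsUnit x), (x⁻¹) ^ 2 := by
      apply Finset.sum_nbij' (f := fun i : ℕ => (((i : ZMod (p^v)))⁻¹) ^ 2)
        (g := fun x : ZMod (p^v) => (x⁻¹) ^ 2) (fun i : ℕ => ((i : ZMod (p^v)))) (fun x : ZMod (p^v) => x.val)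
      · intro a ha
        simp only [Finset.mem_filter, Finset.mem_range, Finset.mem_univ, true_and] at ha ⊢
        exact unit_of_not_dvd p hp v a ha.2
      · intro x hx
        simp only [Finset.mem_filter, Finset.mem_univ, true_and] at hx
        simp only [Finset.mem_filter, Finset.mem_range]
        constructor
        · exact ZMod.val_lt x
        · intro hdvd
          have : ¬ IsUnit ((x.val : ℕ) : ZMod (p^v)) := by
            rw [ZMod.isUnit_iff_coprime]
            intro hco
            have : p ∣ Nat.gcd x.val (p^v) := Nat.dvd_gcd hdvd hpp
            rw [hco] at this
            have := Nat.le_of_dvd (by norm_num) this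
            omega
          rw [ZMod.natCast_val, ZMod.cast_id] at this
          exact this hx
      · intro a ha
        simp only [Finset.mem_filter, Finset.mem_range] at ha
        exact ZMod.val_cast_of_lt ha.1
      · intro x _
        rw [ZMod.natCast_val, ZMod.cast_id]
      · intro a _
        rfl
    rw [hbij]
    exact sum_inv_sq_units (p^v) h2 h3
  rw [hblock, smul_zero]

@[to_additive]
lemma pair_prod (p n : ℕ) (hp : p.Prime) (hodd : 3 ≤ p) (hpn : p ∣ n)
    {M : Type*} [CommMonoid M] (f : ℕ → M) :
    ∏ i ∈ (Finset.range n).filter (fun i => ¬ p ∣ i), f i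
      = ∏ i ∈ ((Finset.range n).filter (fun i => ¬ p ∣ i)).filter (fun i => 2*i < n),
          (f i * f (n - i)) := by
  classical
  set I := (Finset.range n).filter (fun i => ¬ p ∣ i) with hI
  set I₂ := I.filter (fun i => 2*i < n) with hI₂
  have hmemI : ∀ a, a ∈ I ↔ (a < n ∧ ¬ p ∣ a) := by
    intro a; simp [hI, Finset.mem_filter, Finset.mem_range]
  have hpos : ∀ a ∈ I, 1 ≤ a := by
    intro a ha
    rw [hmemI] at ha
    rcases Nat.eq_zero_or_pos a with h | h
    · exact absurd (h ▸ dvd_zero p) ha.2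
    · exact h
  have himg : I.filter (fun i => ¬ 2*i < n) = I₂.image (fun i => n - i) := by
    ext a
    simp only [Finset.mem_filter, Finset.mem_image, hI₂]
    constructor
    · rintro ⟨haI, hge⟩
      have ha := (hmemI a).mp haI
      have ha1 : 1 ≤ a := hpos a haI
      have hne : 2*a ≠ n := by
        intro h
        have : p ∣ 2*a := h ▸ hpn
        rcases (Nat.Prime.dvd_mul hp).mp this with h2 | h2
        · have := Nat.le_of_dvd (by norm_num) h2; omega
        · exact ha.2 h2
      have hgt : n < 2*a := by omega
      refine ⟨n - a, ⟨?_, by omega⟩, by omega⟩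
      rw [hmemI]
      refine ⟨by omega, ?_⟩
      intro hd
      have : p ∣ a := by
        have := Nat.dvd_sub hpn hd
        rwa [Nat.sub_sub_self (by omega)] at this
      exact ha.2 this
    · rintro ⟨b, ⟨⟨hbI, hb2⟩, rfl⟩⟩
      have hb := (hmemI b).mp hbI
      have hb1 : 1 ≤ b := hpos b hbI
      refine ⟨?_, by omega⟩
      rw [hmemI]
      refine ⟨by omega, ?_⟩
      intro hd
      have : p ∣ b := by
        have := Nat.dvd_sub hpn hd
        rwa [Nat.sub_sub_self (by omega)] at this
      exact hb.2 this
  have hsplit := Finset.prod_filter_mul_prod_filter_not I (fun i => 2*i < n) f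
  rw [← hsplit, himg]
  rw [Finset.prod_image ?inj]
  case inj =>
    intro x hx y hy hxy
    have hx' := (hmemI x).mp (Finset.mem_filter.mp hx).1
    have hy' := (hmemI y).mp (Finset.mem_filter.mp hy).1
    simp only at hxy
    omega
  rw [← Finset.prod_mul_distrib]

lemma expand_two {ι : Type*} [DecidableEq ι] {R : Type*} [CommRing R]
    (d : ι → R) (e : R) (s : Finset ι) :
    ∃ J : R, ∏ i ∈ s, (d i + e)
      = ∏ i ∈ s, d i + e * (∑ i ∈ s, ∏ j ∈ s.erase i, d j) + e^2 * J := by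
  induction s using Finset.induction_on with
  | empty => exact ⟨0, by simp⟩
  | @insert a s ha ih =>
    obtain ⟨J, hJ⟩ := ih
    refine ⟨d a * J + (∑ i ∈ s, ∏ j ∈ s.erase i, d j) + e * J, ?_⟩
    rw [Finset.prod_insert ha, hJ]
    have hsum : ∑ i ∈ insert a s, ∏ j ∈ (insert a s).erase i, d j
        = ∏ j ∈ s, d j + d a * ∑ i ∈ s, ∏ j ∈ s.erase i, d j := by
      rw [Finset.sum_insert ha, Finset.erase_insert ha]
      congr 1
      rw [Finset.mul_sum]
      apply Finset.sum_congr rfl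
      intro i hi
      have hne : a ≠ i := fun h => ha (h ▸ hi)
      have hains : a ∉ s.erase i := fun h => ha (Finset.mem_of_mem_erase h)
      rw [Finset.erase_insert_of_ne hne, Finset.prod_insert hains]
    rw [Finset.prod_insert ha, hsum]
    ring

lemma zmod_shrink (p M m : ℕ) (hppos : 0 < p) (hm : m ≤ M) (x : ZMod (p^M))
    (h : (ZMod.castHom (pow_dvd_pow p hm) (ZMod (p^m))) x = 0) :
    ∃ y : ZMod (p^M), x = ((p : ZMod (p^M)))^m * y := by
  haveI : NeZero (p^M) := ⟨by positivity⟩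
  rw [ZMod.castHom_apply, ← ZMod.natCast_val] at h
  rw [ZMod.natCast_eq_zero_iff] at h
  obtain ⟨y, hy⟩ := h
  refine ⟨(y : ZMod (p^M)), ?_⟩
  have hx : ((x.val : ℕ) : ZMod (p^M)) = x := by rw [ZMod.natCast_val, ZMod.cast_id]
  rw [← hx, hy]
  push_cast
  ring

lemma NsubD (p : ℕ) (hp : p.Prime) (hp5 : 5 ≤ p) (w a b : ℕ) (hab : b ≤ a)
    (hwa : p^w ∣ a) (hwb : p^w ∣ b) :
    ((p : ℤ))^(3 + 3*w) ∣
      ((∏ i ∈ (Finset.range (p*b)).filter (fun i => ¬ p ∣ i), (p*(a-b) + i) : ℕ) : ℤ)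
        - ((∏ i ∈ (Finset.range (p*b)).filter (fun i => ¬ p ∣ i), i : ℕ) : ℤ) := by
  classical
  have hppos : 0 < p := hp.pos
  rcases Nat.eq_zero_or_pos b with hb0 | hbpos
  · subst hb0
    simp
  set n := p * b with hn
  set c := a - b with hc
  set M := 3 + 3*w with hM
  set I := (Finset.range n).filter (fun i => ¬ p ∣ i) with hI
  set I₂ := I.filter (fun i => 2*i < n) with hI₂
  set N := (∏ i ∈ I, (p*c + i) : ℕ) with hN
  set D := (∏ i ∈ I, i : ℕ) with hD
  haveI : NeZero (p^M) := ⟨by positivity⟩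
  -- reduce to ZMod equality
  rw [show ((p:ℤ))^(3+3*w) = ((p^M : ℕ) : ℤ) by rw [hM]; push_cast; ring]
  rw [← ZMod.intCast_zmod_eq_zero_iff_dvd _ (p^M)]
  push_cast
  rw [sub_eq_zero]
  -- facts about members of I, I₂
  have hmemI : ∀ i, i ∈ I → i < n ∧ ¬ p ∣ i := by
    intro i hi
    simpa [hI, Finset.mem_filter, Finset.mem_range] using hi
  have hmemI₂ : ∀ i, i ∈ I₂ → (i < n ∧ ¬ p ∣ i) ∧ 2*i < n := by
    intro i hi
    rw [hI₂, Finset.mem_filter] at hi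
    exact ⟨hmemI i hi.1, hi.2⟩
  have hpn : p ∣ n := ⟨b, rfl⟩
  have hndvd : ∀ i ∈ I₂, ¬ p ∣ (i * (n - i)) := by
    intro i hi
    have h := hmemI₂ i hi
    intro hd
    rcases (Nat.Prime.dvd_mul hp).mp hd with h1 | h1
    · exact h.1.2 h1
    · have : p ∣ i := by
        have := Nat.dvd_sub hpn h1
        rwa [Nat.sub_sub_self (le_of_lt h.1.1)] at this
      exact h.1.2 this
  -- the two products over pairs
  have hNpair : ((N : ℕ) : ZMod (p^M)) = ∏ i ∈ I₂, (((p*c + i : ℕ) : ZMod (p^M)) * ((p*c + (n - i) : ℕ) : ZMod (p^M))) := by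
    rw [hN, Nat.cast_prod, pair_prod p n hp (by omega) hpn]
  have hDpair : ((D : ℕ) : ZMod (p^M)) = ∏ i ∈ I₂, (((i : ℕ) : ZMod (p^M)) * (((n - i : ℕ)) : ZMod (p^M))) := by
    rw [hD, Nat.cast_prod, pair_prod p n hp (by omega) hpn]
  set d : ℕ → ZMod (p^M) := fun i => ((i * (n - i) : ℕ) : ZMod (p^M)) with hd
  set e : ZMod (p^M) := ((p*c*n + p^2*c^2 : ℕ) : ZMod (p^M)) with he
  have hpoint : ∀ i ∈ I₂, ((p*c + i : ℕ) : ZMod (p^M)) * ((p*c + (n - i) : ℕ) : ZMod (p^M)) = d i + e := by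
    intro i hi
    have h := hmemI₂ i hi
    have hgen : ∀ k, n = i + k → (p*c + i) * (p*c + k) = i * k + (p*c*n + p^2*c^2) := by
      intro k hk
      rw [hk]
      ring
    have hnat : (p*c + i) * (p*c + (n - i)) = i * (n - i) + (p*c*n + p^2*c^2) :=
      hgen (n - i) (by omega)
    calc ((p*c + i : ℕ) : ZMod (p^M)) * ((p*c + (n - i) : ℕ) : ZMod (p^M))
        = (((p*c + i) * (p*c + (n-i)) : ℕ) : ZMod (p^M)) := by rw [Nat.cast_mul]
      _ = ((i * (n - i) + (p*c*n + p^2*c^2) : ℕ) : ZMod (p^M)) := by rw [hnat]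
      _ = d i + e := by simp only [hd, he, Nat.cast_add]
  have hNd : ((N : ℕ) : ZMod (p^M)) = ∏ i ∈ I₂, (d i + e) := by
    rw [hNpair]
    exact Finset.prod_congr rfl hpoint
  have hDd : ((D : ℕ) : ZMod (p^M)) = ∏ i ∈ I₂, d i := by
    rw [hDpair]
    apply Finset.prod_congr rfl
    intro i _
    simp only [hd, Nat.cast_mul]
  -- e is divisible by p^(2+2w)
  have hpc : p^(1+w) ∣ p * c := by
    rw [pow_add, pow_one]
    exact mul_dvd_mul_left p (Nat.dvd_sub hwa hwb)
  have hpn' : p^(1+w) ∣ n := by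
    rw [pow_add, pow_one, hn]
    exact mul_dvd_mul_left p hwb
  have heu : ∃ u : ℕ, p*c*n + p^2*c^2 = p^(2+2*w) * u := by
    have h1 : p^(2+2*w) ∣ p*c*n := by
      have : p^(1+w) * p^(1+w) = p^(2+2*w) := by rw [← pow_add]; ring_nf
      rw [← this]
      exact mul_dvd_mul hpc hpn'
    have h2 : p^(2+2*w) ∣ p^2*c^2 := by
      have : p^2*c^2 = (p*c)*(p*c) := by ring
      rw [this]
      have h' : p^(1+w) * p^(1+w) = p^(2+2*w) := by rw [← pow_add]; ring_nf
      rw [← h']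
      exact mul_dvd_mul hpc hpc
    exact (Nat.dvd_add h1 h2).elim (fun u hu => ⟨u, hu⟩)
  obtain ⟨u, hu⟩ := heu
  -- expansion
  obtain ⟨J, hJ⟩ := expand_two d e I₂
  -- T := sum of inverses
  set T : ZMod (p^M) := ∑ i ∈ I₂, (d i)⁻¹ with hT
  have hdunit : ∀ i ∈ I₂, IsUnit (d i) := by
    intro i hi
    exact unit_of_not_dvd p hp M _ (hndvd i hi)
  have hE : ∑ i ∈ I₂, ∏ j ∈ I₂.erase i, d j = (∏ i ∈ I₂, d i) * T := by
    rw [hT, Finset.mul_sum]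
    apply Finset.sum_congr rfl
    intro i hi
    have h1 := Finset.prod_erase_mul I₂ d hi
    calc ∏ j ∈ I₂.erase i, d j
        = (∏ j ∈ I₂.erase i, d j) * (d i * (d i)⁻¹) := by
          rw [ZMod.mul_inv_of_unit _ (hdunit i hi), mul_one]
      _ = ((∏ j ∈ I₂.erase i, d j) * d i) * (d i)⁻¹ := by ring
      _ = (∏ j ∈ I₂, d j) * (d i)⁻¹ := by rw [h1]
  -- T is divisible by p^(1+w)
  have hTsmall : ∃ y : ZMod (p^M), T = ((p : ZMod (p^M)))^(1+w) * y := by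
    apply zmod_shrink p M (1+w) hppos (by omega)
    set f := ZMod.castHom (pow_dvd_pow p (show 1+w ≤ M by omega)) (ZMod (p^(1+w))) with hf
    rw [hT, map_sum]
    have hstep : ∀ i ∈ I₂, f ((d i)⁻¹) = -(((i : ZMod (p^(1+w))))⁻¹)^2 := by
      intro i hi
      have h := hmemI₂ i hi
      rw [zcast_inv _ _ (hdunit i hi)]
      have hfd : f (d i) = -(((i : ZMod (p^(1+w))))^2) := by
        rw [hd]
        simp only [hf, map_natCast]
        have hncast : ((n : ℕ) : ZMod (p^(1+w))) = 0 := by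
          rw [ZMod.natCast_eq_zero_iff]
          exact hpn'
        rw [Nat.cast_mul, Nat.cast_sub (le_of_lt h.1.1), hncast]
        ring
      rw [hfd, zinv_neg _ ?_, zinv_sq _ ?_]
      · exact unit_of_not_dvd p hp (1+w) i h.1.2
      · exact IsUnit.pow 2 (unit_of_not_dvd p hp (1+w) i h.1.2)
    rw [Finset.sum_congr rfl hstep]
    have h2u : IsUnit (2 : ZMod (p^(1+w))) := by
      have h := unit_of_not_dvd p hp (1+w) 2 (fun h => by have := Nat.le_of_dvd (by norm_num) h; omega)
      rwa [Nat.cast_ofNat] at h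
    have hIsum := h2_sum p hp hp5 (1+w) (by omega) n hpn'
    rw [pair_sum p n hp (by omega) hpn] at hIsum
    have hpt : ∀ i ∈ I₂, ((((i:ℕ) : ZMod (p^(1+w))))⁻¹)^2 + ((((n-i : ℕ) : ZMod (p^(1+w))))⁻¹)^2
        = 2 * ((((i:ℕ) : ZMod (p^(1+w))))⁻¹)^2 := by
      intro i hi
      have h := hmemI₂ i hi
      have hncast : ((n : ℕ) : ZMod (p^(1+w))) = 0 := by
        rw [ZMod.natCast_eq_zero_iff]
        exact hpn'
      have hcast : (((n-i : ℕ)) : ZMod (p^(1+w))) = -((i:ℕ) : ZMod (p^(1+w))) := by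
        rw [Nat.cast_sub (le_of_lt h.1.1), hncast]
        ring
      rw [hcast, zinv_neg _ (unit_of_not_dvd p hp (1+w) i h.1.2)]
      ring
    rw [Finset.sum_congr rfl hpt, ← Finset.mul_sum] at hIsum
    have hzero : ∑ i ∈ I₂, ((((i:ℕ) : ZMod (p^(1+w))))⁻¹)^2 = 0 := by
      have h2i := ZMod.inv_mul_of_unit 2 h2u
      calc ∑ i ∈ I₂, ((((i:ℕ) : ZMod (p^(1+w))))⁻¹)^2
          = (2⁻¹ * 2) * ∑ i ∈ I₂, ((((i:ℕ) : ZMod (p^(1+w))))⁻¹)^2 := by rw [h2i, one_mul]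
        _ = 2⁻¹ * (2 * ∑ i ∈ I₂, ((((i:ℕ) : ZMod (p^(1+w))))⁻¹)^2) := by ring
        _ = 0 := by rw [hIsum, mul_zero]
    rw [Finset.sum_neg_distrib, hzero, neg_zero]
  -- final assembly
  obtain ⟨y, hy⟩ := hTsmall
  have hecast : e = ((p : ZMod (p^M)))^(2+2*w) * (u : ZMod (p^M)) := by
    rw [he, hu]
    push_cast
    ring
  have hpM0 : ((p : ZMod (p^M)))^(2+2*w) * ((p : ZMod (p^M)))^(1+w) = 0 := by
    rw [← pow_add, show 2+2*w+(1+w) = M by omega, ← Nat.cast_pow, ZMod.natCast_self]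
  have hpowsq : (((p : ZMod (p^M)))^(2+2*w))^2
      = (((p : ZMod (p^M)))^(2+2*w) * ((p : ZMod (p^M)))^(1+w)) * ((p : ZMod (p^M)))^(1+w) := by
    rw [← pow_mul, ← pow_add, ← pow_add]
    congr 1
    omega
  rw [hNd, hDd, hJ, hE]
  calc ∏ i ∈ I₂, d i + e * ((∏ i ∈ I₂, d i) * T) + e^2 * J
      = ∏ i ∈ I₂, d i
        + (((p : ZMod (p^M)))^(2+2*w) * ((p : ZMod (p^M)))^(1+w)) * ((u : ZMod (p^M)) * ((∏ i ∈ I₂, d i) * y))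
        + (((p : ZMod (p^M)))^(2+2*w))^2 * ((u : ZMod (p^M))^2 * J) := by
        rw [hy, hecast]
        ring
    _ = ∏ i ∈ I₂, d i := by
        rw [hpowsq, hpM0]
        ring

lemma fact_shift (m k : ℕ) : (m + k).factorial = m.factorial * ∏ i ∈ Finset.Ico 1 (k+1), (m + i) := by
  induction k with
  | zero => simp
  | succ k ih =>
    rw [show m + (k+1) = (m + k) + 1 by ring, Nat.factorial_succ, ih]
    rw [show k + 1 + 1 = (k+1) + 1 by rfl, Finset.prod_Ico_succ_top (by omega : 1 ≤ k + 1)]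
    ring

lemma filter_eq_range_filter (p b : ℕ) (hp : 0 < p) :
    (Finset.Ico 1 (p*b+1)).filter (fun i => ¬ p ∣ i) = (Finset.range (p*b)).filter (fun i => ¬ p ∣ i) := by
  ext x
  simp only [Finset.mem_filter, Finset.mem_Ico, Finset.mem_range]
  constructor
  · rintro ⟨⟨h1, h2⟩, h3⟩
    refine ⟨?_, h3⟩
    rcases Nat.lt_or_ge x (p*b) with h | h
    · exact h
    · exfalso
      apply h3
      have hx : x = p * b := by omega
      exact hx ▸ Dvd.intro b rfl
  · rintro ⟨h1, h2⟩
    have : x ≠ 0 := fun h => h2 (h ▸ dvd_zero p)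
    exact ⟨⟨by omega, by omega⟩, h2⟩

lemma filter_mult_eq_image (p b : ℕ) (hp : 0 < p) :
    (Finset.Ico 1 (p*b+1)).filter (fun i => p ∣ i) = (Finset.Ico 1 (b+1)).image (fun ℓ => p * ℓ) := by
  ext x
  simp only [Finset.mem_filter, Finset.mem_Ico, Finset.mem_image]
  constructor
  · rintro ⟨⟨h1, h2⟩, ℓ, rfl⟩
    refine ⟨ℓ, ⟨?_, ?_⟩, by ring⟩
    · rcases Nat.eq_zero_or_pos ℓ with h | h
      · subst h; omega
      · exact h
    · by_contra h
      push_neg at h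
      have h4 : p * (b+1) ≤ p * ℓ := Nat.mul_le_mul_left p h
      have h5 : p * (b+1) = p * b + p := by ring
      omega
  · rintro ⟨ℓ, ⟨h1, h2⟩, rfl⟩
    refine ⟨⟨?_, ?_⟩, Dvd.intro ℓ rfl⟩
    · have : 1 * 1 ≤ p * ℓ := Nat.mul_le_mul hp h1
      omega
    · have : p * ℓ ≤ p * b := Nat.mul_le_mul_left p (by omega)
      omega

lemma choose_prod_identity (p a b : ℕ) (hp : 0 < p) (hb : b ≤ a) :
    Nat.choose (p*a) (p*b) * ∏ i ∈ (Finset.range (p*b)).filter (fun i => ¬ p ∣ i), i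
      = (∏ i ∈ (Finset.range (p*b)).filter (fun i => ¬ p ∣ i), (p*(a-b) + i)) * Nat.choose a b := by
  set c := a - b with hc
  have hcb : c + b = a := by omega
  set I := (Finset.range (p*b)).filter (fun i => ¬ p ∣ i) with hI
  set D := ∏ i ∈ I, i with hD
  set N := ∏ i ∈ I, (p*c + i) with hN
  set X := Nat.choose (p*a) (p*b) with hX
  set Y := Nat.choose a b with hY
  -- inner products over multiples
  have hQ : ∏ i ∈ (Finset.Ico 1 (p*b+1)).filter (fun i => p ∣ i), (p*c + i)
      = p^b * ∏ ℓ ∈ Finset.Ico 1 (b+1), (c + ℓ) := by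
    rw [filter_mult_eq_image p b hp, Finset.prod_image (by
      intro x _ y _ h
      exact Nat.eq_of_mul_eq_mul_left hp h)]
    have : ∀ ℓ ∈ Finset.Ico 1 (b+1), p*c + p*ℓ = p * (c + ℓ) := by intro ℓ _; ring
    rw [Finset.prod_congr rfl this, Finset.prod_mul_distrib, Finset.prod_const, Nat.card_Ico]
    simp
  have hQ0 : ∏ i ∈ (Finset.Ico 1 (p*b+1)).filter (fun i => p ∣ i), i = p^b * b.factorial := by
    rw [filter_mult_eq_image p b hp, Finset.prod_image (by
      intro x _ y _ h
      exact Nat.eq_of_mul_eq_mul_left hp h)]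
    rw [Finset.prod_mul_distrib, Finset.prod_const, Nat.card_Ico, Finset.prod_Ico_id_eq_factorial]
    simp
  -- full products
  have hP : (p*a).factorial = (p*c).factorial * (N * (p^b * ∏ ℓ ∈ Finset.Ico 1 (b+1), (c + ℓ))) := by
    have h1 : p * a = p*c + p*b := by rw [← hcb]; ring
    rw [h1, fact_shift]
    congr 1
    rw [← Finset.prod_filter_mul_prod_filter_not (Finset.Ico 1 (p*b+1)) (fun i => p ∣ i) (fun i => p*c + i)]
    rw [hQ, filter_eq_range_filter p b hp, ← hI, ← hN]
    ring
  have hPb : (p*b).factorial = D * (p^b * b.factorial) := by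
    have h0 : (p*b).factorial = (0 + p*b).factorial := by rw [Nat.zero_add]
    rw [h0, fact_shift, Nat.factorial_zero, one_mul]
    have hid : ∀ i ∈ Finset.Ico 1 (p*b+1), 0 + i = i := by intro i _; ring
    rw [Finset.prod_congr rfl hid]
    rw [← Finset.prod_filter_mul_prod_filter_not (Finset.Ico 1 (p*b+1)) (fun i => p ∣ i) (fun i => i)]
    rw [hQ0, filter_eq_range_filter p b hp, ← hI, ← hD]
    ring
  have hPa : a.factorial = c.factorial * ∏ ℓ ∈ Finset.Ico 1 (b+1), (c + ℓ) := by
    rw [← hcb, fact_shift]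
  -- choose identities
  have hXfact : X * (p*b).factorial * (p*c).factorial = (p*a).factorial := by
    have h1 : p*a - p*b = p*c := by rw [← hcb]; ring_nf; omega
    rw [hX, ← h1]
    exact Nat.choose_mul_factorial_mul_factorial (Nat.mul_le_mul_left p hb)
  have hYfact : Y * b.factorial * c.factorial = a.factorial := by
    have h1 : a - b = c := hc.symm
    rw [hY, ← h1]
    exact Nat.choose_mul_factorial_mul_factorial hb
  -- combine
  have key : (X * D) * (p^b * b.factorial * (p*c).factorial * c.factorial)
      = (N * Y) * (p^b * b.factorial * (p*c).factorial * c.factorial) := by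
    calc (X * D) * (p^b * b.factorial * (p*c).factorial * c.factorial)
        = (X * (D * (p^b * b.factorial)) * (p*c).factorial) * c.factorial := by ring
      _ = (X * (p*b).factorial * (p*c).factorial) * c.factorial := by rw [hPb]
      _ = (p*a).factorial * c.factorial := by rw [hXfact]
      _ = ((p*c).factorial * (N * (p^b * ∏ ℓ ∈ Finset.Ico 1 (b+1), (c + ℓ)))) * c.factorial := by rw [hP]
      _ = N * (c.factorial * ∏ ℓ ∈ Finset.Ico 1 (b+1), (c + ℓ)) * (p^b * (p*c).factorial) := by ring
      _ = N * a.factorial * (p^b * (p*c).factorial) := by rw [hPa]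
      _ = N * (Y * b.factorial * c.factorial) * (p^b * (p*c).factorial) := by rw [hYfact]
      _ = (N * Y) * (p^b * b.factorial * (p*c).factorial * c.factorial) := by ring
  have hpos : 0 < p^b * b.factorial * (p*c).factorial * c.factorial := by positivity
  exact Nat.eq_of_mul_eq_mul_right hpos key

lemma choose_pow_dvd (p : ℕ) (hp : p.Prime) (n k u : ℕ) (hk : 0 < k) (hkn : k ≤ n)
    (hu : p^u ∣ n) : p^(u - (Nat.factorization k) p) ∣ Nat.choose n k := by
  obtain ⟨n', rfl⟩ : ∃ n', n = n' + 1 := ⟨n-1, by omega⟩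
  obtain ⟨k', rfl⟩ : ∃ k', k = k' + 1 := ⟨k-1, by omega⟩
  have hid := Nat.add_one_mul_choose_eq n' k'
  have hC0 : Nat.choose (n'+1) (k'+1) ≠ 0 := (Nat.choose_pos hkn).ne'
  have hk0 : (k'+1) ≠ 0 := by omega
  have hdvd : p^u ∣ Nat.choose (n'+1) (k'+1) * (k'+1) := by
    rw [← hid]
    exact Dvd.dvd.mul_right hu _
  have hne : Nat.choose (n'+1) (k'+1) * (k'+1) ≠ 0 := Nat.mul_ne_zero hC0 hk0
  rw [Nat.Prime.pow_dvd_iff_le_factorization hp hne, Nat.factorization_mul hC0 hk0,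
    Finsupp.add_apply] at hdvd
  rw [Nat.Prime.pow_dvd_iff_le_factorization hp hC0]
  omega

lemma kaz (p : ℕ) (hp : p.Prime) (hp5 : 5 ≤ p) (w W a b : ℕ) (hb : b ≤ a)
    (hwa : p^w ∣ a) (hwb : p^w ∣ b) (hW : p^W ∣ Nat.choose a b) :
    ((p:ℤ))^(3 + 3*w + W) ∣ (Nat.choose (p*a) (p*b) : ℤ) - (Nat.choose a b : ℤ) := by
  have hppos : 0 < p := hp.pos
  set I := (Finset.range (p*b)).filter (fun i => ¬ p ∣ i) with hI
  set D := (∏ i ∈ I, i : ℕ) with hD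
  set N := (∏ i ∈ I, (p*(a-b) + i) : ℕ) with hN
  have hprod : Nat.choose (p*a) (p*b) * D = N * Nat.choose a b :=
    choose_prod_identity p a b hppos hb
  have hprodZ : ((Nat.choose (p*a) (p*b) : ℤ) - (Nat.choose a b : ℤ)) * (D : ℤ)
      = ((N : ℤ) - (D : ℤ)) * (Nat.choose a b : ℤ) := by
    have := congrArg (fun x : ℕ => (x : ℤ)) hprod
    push_cast at this
    linarith [this]
  have hdvd1 : ((p:ℤ))^(3 + 3*w + W) ∣ ((N : ℤ) - (D : ℤ)) * (Nat.choose a b : ℤ) := by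
    rw [pow_add]
    apply mul_dvd_mul
    · exact NsubD p hp hp5 w a b hb hwa hwb
    · exact_mod_cast Int.natCast_dvd_natCast.mpr hW
  rw [← hprodZ] at hdvd1
  have hcop : IsCoprime ((p:ℤ)^(3 + 3*w + W)) ((D:ℤ)) := by
    apply IsCoprime.pow_left
    rw [Nat.isCoprime_iff_coprime]
    apply Nat.Coprime.prod_right
    intro i hi
    have : ¬ p ∣ i := (Finset.mem_filter.mp hi).2
    exact (Nat.Prime.coprime_iff_not_dvd hp).mpr this
  exact hcop.dvd_of_dvd_mul_right hdvd1

lemma term_dvd (p : ℕ) (hp : p.Prime) (hp5 : 5 ≤ p) (A B m s : ℕ) (hA : 3 ≤ A)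
    (hs : 1 ≤ s) (j : ℕ) (hj1 : 1 ≤ j) (hj : j ≤ m * p^(s-1)) :
    ((p:ℤ))^(3*s) ∣ ((Nat.choose (m*p^s) (p*j)) : ℤ)^A * ((Nat.choose (2*(p*j)) (p*j)) : ℤ)^B
      - ((Nat.choose (m*p^(s-1)) j) : ℤ)^A * ((Nat.choose (2*j) j) : ℤ)^B := by
  have hppos : 0 < p := hp.pos
  set t := (Nat.factorization j) p with ht
  set w := min t (s-1) with hw
  set e := s - 1 - w with he
  have hwe : w + e = s - 1 := by omega
  have hsplit : m * p^s = p * (m * p^(s-1)) := by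
    have h : s - 1 + 1 = s := by omega
    calc m * p^s = m * (p^(s-1) * p) := by rw [← pow_succ, h]
      _ = p * (m * p^(s-1)) := by ring
  have hpt : p^t ∣ j := Nat.ordProj_dvd j p
  have hwj : p^w ∣ j := dvd_trans (pow_dvd_pow p (by omega)) hpt
  have hwa : p^w ∣ m * p^(s-1) := Dvd.dvd.mul_left (pow_dvd_pow p (by omega)) m
  set X := ((Nat.choose (m*p^s) (p*j)) : ℤ) with hX
  set Y := ((Nat.choose (m*p^(s-1)) j) : ℤ) with hY
  set U := ((Nat.choose (2*(p*j)) (p*j)) : ℤ) with hU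
  set V := ((Nat.choose (2*j) j) : ℤ) with hV
  have hj0 : j ≠ 0 := by omega
  -- p^e ∣ Y
  have hYe' : p^e ∣ Nat.choose (m*p^(s-1)) j := by
    have h := choose_pow_dvd p hp (m * p^(s-1)) j (s-1) (by omega) hj
      (Dvd.dvd.mul_left (pow_dvd_pow p le_rfl) m)
    exact dvd_trans (pow_dvd_pow p (by omega)) h
  have hYe : (p:ℤ)^e ∣ Y := by
    rw [hY]
    exact_mod_cast hYe'
  -- p^e ∣ X
  have hXe : (p:ℤ)^e ∣ X := by
    have hfact : (Nat.factorization (p*j)) p = 1 + t := by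
      rw [Nat.factorization_mul (by omega) hj0, Finsupp.add_apply, hp.factorization_self]
    have hle : p * j ≤ m * p^s := by
      rw [hsplit]
      exact Nat.mul_le_mul_left p hj
    have h := choose_pow_dvd p hp (m * p^s) (p*j) s (by positivity) hle
      (Dvd.dvd.mul_left (pow_dvd_pow p le_rfl) m)
    rw [hfact] at h
    have h2 : p^e ∣ Nat.choose (m*p^s) (p*j) := dvd_trans (pow_dvd_pow p (by omega)) h
    rw [hX]
    exact_mod_cast h2
  -- Kazandzidis for the two pairs
  have hXY : (p:ℤ)^(3 + 3*w + e) ∣ X - Y := by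
    have h := kaz p hp hp5 w e (m * p^(s-1)) j hj hwa hwj hYe'
    rw [← hsplit] at h
    exact h
  have hUV : (p:ℤ)^(3 + 3*w) ∣ U - V := by
    have h := kaz p hp hp5 w 0 (2*j) j (by omega) (Dvd.dvd.mul_left hwj 2) hwj
      (by rw [pow_zero]; exact one_dvd _)
    rw [show p * (2*j) = 2*(p*j) by ring] at h
    rw [show 3 + 3*w + 0 = 3 + 3*w by omega] at h
    exact h
  -- exponent bound
  have hbound : 3*s ≤ 3 + 3*w + e*A := by
    have h3 : 3*e ≤ e*A := by
      calc 3*e = e*3 := by ring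
        _ ≤ e*A := Nat.mul_le_mul_left e hA
    omega
  have key : X^A * U^B - Y^A * V^B = X^A * (U^B - V^B) + (X^A - Y^A) * V^B := by ring
  rw [key]
  apply dvd_add
  · -- first part
    have h1 : (p:ℤ)^(e*A) ∣ X^A := by
      obtain ⟨x, hx⟩ := hXe
      refine ⟨x^A, ?_⟩
      rw [hx, mul_pow, ← pow_mul]
    have h2 : (p:ℤ)^(3+3*w) ∣ U^B - V^B :=
      dvd_trans hUV (sub_dvd_pow_sub_pow U V B)
    have h3 : (p:ℤ)^(e*A) * (p:ℤ)^(3+3*w) ∣ X^A * (U^B - V^B) := mul_dvd_mul h1 h2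
    rw [← pow_add] at h3
    exact dvd_trans (pow_dvd_pow (p:ℤ) (by omega)) h3
  · -- second part
    have hgeom := geom_sum₂_mul X Y A
    have hS : (p:ℤ)^(e*(A-1)) ∣ ∑ i ∈ Finset.range A, X^i * Y^(A-1-i) := by
      apply Finset.dvd_sum
      intro i hi
      rw [Finset.mem_range] at hi
      have h1 : (p:ℤ)^(e*i) ∣ X^i := by
        obtain ⟨x, hx⟩ := hXe
        exact ⟨x^i, by rw [hx, mul_pow, ← pow_mul]⟩
      have h2 : (p:ℤ)^(e*(A-1-i)) ∣ Y^(A-1-i) := by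
        obtain ⟨y, hy⟩ := hYe
        exact ⟨y^(A-1-i), by rw [hy, mul_pow, ← pow_mul]⟩
      have h3 := mul_dvd_mul h1 h2
      rw [← pow_add] at h3
      have : e*i + e*(A-1-i) = e*(A-1) := by
        rw [← Nat.mul_add]
        congr 1
        omega
      rwa [this] at h3
    have h4 : (p:ℤ)^(e*(A-1)) * (p:ℤ)^(3+3*w+e) ∣ (∑ i ∈ Finset.range A, X^i * Y^(A-1-i)) * (X - Y) :=
      mul_dvd_mul hS hXY
    rw [hgeom, ← pow_add] at h4
    have h5 : (p:ℤ)^(3*s) ∣ X^A - Y^A := by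
      refine dvd_trans (pow_dvd_pow (p:ℤ) ?_) h4
      have : e*(A-1) + e = e*A := by
        rw [← Nat.mul_succ]
        congr 1
        omega
      omega
    exact Dvd.dvd.mul_right h5 _

lemma coster (p : ℕ) (hp : p.Prime) (hp5 : 5 ≤ p) (A B m : ℕ) (hA : 3 ≤ A)
    (s : ℕ) (hs : 1 ≤ s) :
    ((p:ℤ))^(3*s) ∣
      ((∑ i ∈ Finset.range (m*p^s+1), Nat.choose (m*p^s) i ^ A * Nat.choose (2*i) i ^ B : ℕ) : ℤ)
      - ((∑ j ∈ Finset.range (m*p^(s-1)+1), Nat.choose (m*p^(s-1)) j ^ A * Nat.choose (2*j) j ^ B : ℕ) : ℤ) := by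
  classical
  have hppos : 0 < p := hp.pos
  have hsplit : m * p^s = p * (m * p^(s-1)) := by
    have h : s - 1 + 1 = s := by omega
    calc m * p^s = m * (p^(s-1) * p) := by rw [← pow_succ, h]
      _ = p * (m * p^(s-1)) := by ring
  set F : ℕ → ℤ := fun i => ((Nat.choose (m*p^s) i : ℤ))^A * ((Nat.choose (2*i) i : ℤ))^B with hF
  set G : ℕ → ℤ := fun j => ((Nat.choose (m*p^(s-1)) j : ℤ))^A * ((Nat.choose (2*j) j : ℤ))^B with hG
  have hcastF : ((∑ i ∈ Finset.range (m*p^s+1), Nat.choose (m*p^s) i ^ A * Nat.choose (2*i) i ^ B : ℕ) : ℤ)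
      = ∑ i ∈ Finset.range (m*p^s+1), F i := by
    push_cast [hF]
    rfl
  have hcastG : ((∑ j ∈ Finset.range (m*p^(s-1)+1), Nat.choose (m*p^(s-1)) j ^ A * Nat.choose (2*j) j ^ B : ℕ) : ℤ)
      = ∑ j ∈ Finset.range (m*p^(s-1)+1), G j := by
    push_cast [hG]
    rfl
  rw [hcastF, hcastG]
  -- split the big sum
  have hfil : (Finset.range (m*p^s+1)).filter (fun i => p ∣ i)
      = (Finset.range (m*p^(s-1)+1)).image (fun j => p * j) := by
    ext x
    simp only [Finset.mem_filter, Finset.mem_range, Finset.mem_image]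
    constructor
    · rintro ⟨h1, u, rfl⟩
      refine ⟨u, ?_, rfl⟩
      rw [hsplit] at h1
      have : u ≤ m * p^(s-1) := by
        by_contra hcon
        push_neg at hcon
        have : p * (m * p^(s-1) + 1) ≤ p * u := Nat.mul_le_mul_left p hcon
        have h2 : p * (m * p^(s-1) + 1) = p * (m*p^(s-1)) + p := by ring
        omega
      omega
    · rintro ⟨u, hu, rfl⟩
      constructor
      · rw [hsplit]
        have : p * u ≤ p * (m * p^(s-1)) := Nat.mul_le_mul_left p (by omega)
        omega
      · exact Dvd.intro u rfl
  have hsum1 : ∑ i ∈ Finset.range (m*p^s+1), F i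
      = (∑ j ∈ Finset.range (m*p^(s-1)+1), F (p*j))
        + ∑ i ∈ (Finset.range (m*p^s+1)).filter (fun i => ¬ p ∣ i), F i := by
    rw [← Finset.sum_filter_add_sum_filter_not (Finset.range (m*p^s+1)) (fun i => p ∣ i) F]
    congr 1
    rw [hfil, Finset.sum_image (by
      intro x _ y _ h
      exact Nat.eq_of_mul_eq_mul_left hppos h)]
  rw [hsum1]
  have hrearr : (∑ j ∈ Finset.range (m*p^(s-1)+1), F (p*j))
        + (∑ i ∈ (Finset.range (m*p^s+1)).filter (fun i => ¬ p ∣ i), F i)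
        - ∑ j ∈ Finset.range (m*p^(s-1)+1), G j
      = (∑ j ∈ Finset.range (m*p^(s-1)+1), (F (p*j) - G j))
        + ∑ i ∈ (Finset.range (m*p^s+1)).filter (fun i => ¬ p ∣ i), F i := by
    rw [Finset.sum_sub_distrib]
    ring
  rw [hrearr]
  apply dvd_add
  · apply Finset.dvd_sum
    intro j hj
    rw [Finset.mem_range] at hj
    rcases Nat.eq_zero_or_pos j with rfl | hj1
    · simp [hF, hG]
    · exact term_dvd p hp hp5 A B m s hA hs j hj1 (by omega)
  · apply Finset.dvd_sum
    intro i hi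
    rw [Finset.mem_filter, Finset.mem_range] at hi
    have hi0 : 0 < i := by
      rcases Nat.eq_zero_or_pos i with rfl | h
      · exact absurd (dvd_zero p) hi.2
      · exact h
    have hfz : (Nat.factorization i) p = 0 := Nat.factorization_eq_zero_of_not_dvd hi.2
    have hdvd : p^s ∣ Nat.choose (m*p^s) i := by
      have h := choose_pow_dvd p hp (m*p^s) i s hi0 (by omega)
        (Dvd.dvd.mul_left (pow_dvd_pow p le_rfl) m)
      rwa [hfz, Nat.sub_zero] at h
    have hdvdZ : (p:ℤ)^s ∣ ((Nat.choose (m*p^s) i) : ℤ) := by exact_mod_cast hdvd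
    obtain ⟨x, hx⟩ := hdvdZ
    have h1 : (p:ℤ)^(s*A) ∣ F i := by
      rw [hF]
      simp only
      refine Dvd.dvd.mul_right ⟨x^A, ?_⟩ _
      rw [hx, mul_pow, ← pow_mul]
    refine dvd_trans (pow_dvd_pow (p:ℤ) ?_) h1
    calc 3*s = s*3 := by ring
      _ ≤ s*A := Nat.mul_le_mul_left s hA

theorem three_term_congruence (p : ℕ) (hp : p.Prime) (hp3 : 3 < p)
    (A B : ℕ) (hA : 3 ≤ A) (γ : ℕ → ℤ) (c : ℤ) (k : ℕ) (hk2 : 2 ≤ k) (hk4 : k < 4)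
    (hγ : γ p = 1 + c * (p : ℤ) ^ (k - 1)) (m r : ℕ) (hm : 1 ≤ m) (hr : 3 ≤ r) :
    ((∑ j ∈ Finset.range (m * p ^ r + 1),
        (Nat.choose (m * p ^ r) j) ^ A * (Nat.choose (2 * j) j) ^ B : ℕ) : ℤ) -
      γ p * ((∑ j ∈ Finset.range (m * p ^ (r - 1) + 1),
        (Nat.choose (m * p ^ (r - 1)) j) ^ A * (Nat.choose (2 * j) j) ^ B : ℕ) : ℤ) +
      c * (p : ℤ) ^ (k - 1) * ((∑ j ∈ Finset.range (m * p ^ (r - 2) + 1),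
        (Nat.choose (m * p ^ (r - 2)) j) ^ A * (Nat.choose (2 * j) j) ^ B : ℕ) : ℤ) ≡
      0 [ZMOD (p : ℤ) ^ (3 * r + k - 4)] := by
  have hp5 : 5 ≤ p := by
    rcases Nat.lt_or_ge p 5 with h | h
    · interval_cases p <;> first | omega | (exfalso; revert hp; decide)
    · exact h
  set C : ℕ → ℤ := fun s =>
    ((∑ j ∈ Finset.range (m * p ^ s + 1),
        (Nat.choose (m * p ^ s) j) ^ A * (Nat.choose (2 * j) j) ^ B : ℕ) : ℤ) with hC
  have h1 : ((p:ℤ))^(3*r) ∣ C r - C (r-1) := by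
    have := coster p hp hp5 A B m hA r (by omega)
    simpa [hC] using this
  have h2 : ((p:ℤ))^(3*(r-1)) ∣ C (r-1) - C (r-2) := by
    have := coster p hp hp5 A B m hA (r-1) (by omega)
    rw [show r - 1 - 1 = r - 2 by omega] at this
    simpa [hC] using this
  show C r - γ p * C (r-1) + c * (p:ℤ)^(k-1) * C (r-2) ≡ 0 [ZMOD (p:ℤ)^(3*r+k-4)]
  rw [Int.modEq_zero_iff_dvd]
  have hLHS : C r - γ p * C (r-1) + c * (p:ℤ)^(k-1) * C (r-2)
      = (C r - C (r-1)) - c * (p:ℤ)^(k-1) * (C (r-1) - C (r-2)) := by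
    rw [hγ]
    ring
  rw [hLHS]
  apply dvd_sub
  · exact dvd_trans (pow_dvd_pow (p:ℤ) (by omega)) h1
  · have hsplit : ((p:ℤ))^(3*r+k-4) = (p:ℤ)^(k-1) * (p:ℤ)^(3*(r-1)) := by
      rw [← pow_add]
      congr 1
      omega
    rw [hsplit, show c * (p:ℤ)^(k-1) * (C (r-1) - C (r-2)) = (p:ℤ)^(k-1) * (c * (C (r-1) - C (r-2))) by ring]
    exact mul_dvd_mul_left _ (Dvd.dvd.mul_left h2 c)
end

section
/- For a prime p > 3 and any A ≥ 3, B ∈ ℕ, the congruence C(p, A, B) ≡ C(1, A, B) = 1 + 2^B (mod p^3) holds, where C(n, A, B) = Σ_{k=0}^{n} binom(n,k)^A · binom(2k,k)^B. -/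
open Finset

private lemma choose_sign (p : ℕ) (hp : p.Prime) :
    ∀ k, k ≤ p - 1 → ((p - 1).choose k : ZMod p) = (-1) ^ k := by
  intro k
  induction k with
  | zero => simp
  | succ n ih =>
    intro hn
    have hn' : n ≤ p - 1 := Nat.le_of_succ_le hn
    have hps : p - 1 + 1 = p := Nat.succ_pred_eq_of_pos hp.pos
    have h1 : p.choose (n + 1) = (p - 1).choose n + (p - 1).choose (n + 1) := by
      have h := Nat.choose_succ_succ (p - 1) n
      simpa [hps, Nat.succ_eq_add_one] using h
    have h2 : p ∣ p.choose (n + 1) :=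
      hp.dvd_choose_self (Nat.succ_ne_zero n) (by omega)
    have h3 : ((p.choose (n + 1) : ℕ) : ZMod p) = 0 :=
      (ZMod.natCast_eq_zero_iff _ _).mpr h2
    have := ih hn'
    rw [h1] at h3
    push_cast at h3
    rw [this] at h3
    have : ((p - 1).choose (n + 1) : ZMod p) = -(-1) ^ n := by linear_combination h3
    rw [this, pow_succ]
    ring

private lemma sum_q_sq (p : ℕ) (hp : p.Prime) (hp3 : 3 < p) :
    p ∣ ∑ k ∈ Finset.Ico 1 p, (p.choose k / p) ^ 2 := by
  haveI : Fact p.Prime := ⟨hp⟩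
  rw [← ZMod.natCast_eq_zero_iff]
  push_cast
  have hterm : ∀ k ∈ Finset.Ico 1 p,
      ((p.choose k / p : ℕ) : ZMod p) ^ 2 = ((k : ZMod p)⁻¹) ^ 2 := by
    intro k hk
    rw [Finset.mem_Ico] at hk
    obtain ⟨hk1, hk2⟩ := hk
    have hdvd : p ∣ p.choose k := hp.dvd_choose_self (by omega) hk2
    -- k * (choose p k / p) = choose (p-1) (k-1)
    have hkey : k * (p.choose k / p) = (p - 1).choose (k - 1) := by
      have h := Nat.add_one_mul_choose_eq (p - 1) (k - 1)
      rw [(by omega : p - 1 + 1 = p), (by omega : k - 1 + 1 = k)] at h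
      -- h : p * (p-1).choose (k-1) = p.choose k * k
      have h2 : p * (k * (p.choose k / p)) = p * ((p - 1).choose (k - 1)) := by
        rw [mul_comm k _, ← mul_assoc, Nat.mul_div_cancel' hdvd]
        rw [h]
      exact Nat.eq_of_mul_eq_mul_left hp.pos h2
    have hkz : (k : ZMod p) ≠ 0 := by
      rw [Ne, ZMod.natCast_eq_zero_iff]
      intro hd
      exact absurd (Nat.le_of_dvd (by omega) hd) (by omega)
    have hcast : (k : ZMod p) * ((p.choose k / p : ℕ) : ZMod p)
        = ((p - 1).choose (k - 1) : ZMod p) := by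
      rw [← Nat.cast_mul, hkey]
    have hsign : (((p - 1).choose (k - 1) : ℕ) : ZMod p) = (-1) ^ (k - 1) :=
      choose_sign p hp (k - 1) (by omega)
    have hq : ((p.choose k / p : ℕ) : ZMod p) = (k : ZMod p)⁻¹ * (-1) ^ (k - 1) := by
      field_simp at hcast ⊢
      rw [mul_comm] at hcast
      rw [mul_comm, hcast, hsign]
    rw [hq, mul_pow, ← pow_mul]
    have : ((-1 : ZMod p)) ^ ((k - 1) * 2) = 1 := by
      rw [mul_comm, pow_mul]
      norm_num
    rw [this, mul_one]
  rw [Finset.sum_congr rfl hterm]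
  -- extend to range p, then to univ
  have h0 : ∑ k ∈ Finset.Ico 1 p, ((k : ZMod p)⁻¹) ^ 2
      = ∑ k ∈ Finset.range p, ((k : ZMod p)⁻¹) ^ 2 := by
    rw [Finset.range_eq_Ico, Finset.sum_eq_sum_Ico_succ_bot (by omega : 0 < p)]
    simp
  rw [h0]
  have h1 : ∑ k ∈ Finset.range p, ((k : ZMod p)⁻¹) ^ 2
      = ∑ x : ZMod p, (x⁻¹) ^ 2 := by
    refine Finset.sum_nbij' (fun k => ((k : ZMod p))) (fun x => x.val) ?_ ?_ ?_ ?_ ?_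
    · intro a _; exact Finset.mem_univ _
    · intro a _; exact Finset.mem_range.mpr (ZMod.val_lt a)
    · intro a ha; exact ZMod.val_natCast_of_lt (Finset.mem_range.mp ha)
    · intro a _; exact ZMod.natCast_zmod_val a
    · intro a _; rfl
  rw [h1]
  have h2 : ∑ x : ZMod p, (x⁻¹) ^ 2 = ∑ x : ZMod p, x ^ 2 :=
    Fintype.sum_equiv (Equiv.inv (ZMod p)) _ _ (fun x => rfl)
  rw [h2]
  have hcard : Fintype.card (ZMod p) = p := ZMod.card p
  have := FiniteField.sum_pow_lt_card_sub_one (ZMod p) 2 (by rw [hcard]; omega)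
  exact this

private lemma central_binom_mod (p : ℕ) (hp : p.Prime) (hp3 : 3 < p) :
    (((2 * p).choose p : ℕ) : ZMod (p ^ 3)) = 2 := by
  have hvan : (2 * p).choose p = ∑ k ∈ Finset.range (p + 1), p.choose k ^ 2 := by
    rw [two_mul, Nat.add_choose_eq, Finset.Nat.sum_antidiagonal_eq_sum_range_succ_mk]
    apply Finset.sum_congr rfl
    intro k hk
    rw [Finset.mem_range] at hk
    rw [Nat.choose_symm (by omega : k ≤ p), sq]
  have hsplit : (2 * p).choose p = 2 + ∑ k ∈ Finset.Ico 1 p, p.choose k ^ 2 := by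
    rw [hvan, Finset.sum_range_succ, Finset.range_eq_Ico,
      Finset.sum_eq_sum_Ico_succ_bot (by omega : 0 < p)]
    simp [Nat.choose_self, Nat.choose_zero_right]
    ring
  have hmid : ∑ k ∈ Finset.Ico 1 p, p.choose k ^ 2
      = p ^ 2 * ∑ k ∈ Finset.Ico 1 p, (p.choose k / p) ^ 2 := by
    rw [Finset.mul_sum]
    apply Finset.sum_congr rfl
    intro k hk
    rw [Finset.mem_Ico] at hk
    have hdvd : p ∣ p.choose k := hp.dvd_choose_self (by omega) hk.2
    rw [← mul_pow, Nat.mul_div_cancel' hdvd]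
  obtain ⟨t, ht⟩ := sum_q_sq p hp hp3
  rw [hsplit, hmid, ht]
  push_cast
  rw [(by ring : ((p : ZMod (p ^ 3))) ^ 2 * ((p : ZMod (p^3)) * (t : ZMod (p^3)))
      = (p : ZMod (p^3)) ^ 3 * t)]
  have : ((p : ZMod (p ^ 3))) ^ 3 = 0 := by
    rw [← Nat.cast_pow, ZMod.natCast_self]
  rw [this, zero_mul, add_zero]

theorem C_p_congruence_mod_p_cubed (p : ℕ) (hp : p.Prime) (hp3 : 3 < p)
    (A B : ℕ) (hA : 3 ≤ A) :
    (∑ k ∈ Finset.range (p + 1),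
        (Nat.choose p k) ^ A * (Nat.choose (2 * k) k) ^ B) ≡ 1 + 2 ^ B [MOD p ^ 3] ∧
    (∑ k ∈ Finset.range 2,
        (Nat.choose 1 k) ^ A * (Nat.choose (2 * k) k) ^ B) = 1 + 2 ^ B := by
  constructor
  · rw [← ZMod.natCast_eq_natCast_iff]
    push_cast
    rw [Finset.sum_range_succ, Finset.range_eq_Ico,
      Finset.sum_eq_sum_Ico_succ_bot (by omega : 0 < p)]
    have hmid : ∑ k ∈ Finset.Ico 1 p,
        ((p.choose k : ZMod (p ^ 3))) ^ A * (((2 * k).choose k : ℕ) : ZMod (p ^ 3)) ^ B = 0 := by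
      apply Finset.sum_eq_zero
      intro k hk
      rw [Finset.mem_Ico] at hk
      have hdvd : p ∣ p.choose k := hp.dvd_choose_self (by omega) hk.2
      obtain ⟨c, hc⟩ := hdvd
      have : ((p.choose k : ZMod (p ^ 3))) ^ A = 0 := by
        rw [hc]
        push_cast
        rw [mul_pow, (by omega : A = 3 + (A - 3)), pow_add, ← Nat.cast_pow,
          ZMod.natCast_self]
        ring
      rw [this, zero_mul]
    rw [hmid, central_binom_mod p hp hp3]
    simp [Nat.choose_self, Nat.choose_zero_right]
  · simp [Finset.sum_range_succ]
end
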